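/- Let ℓ₁, ℓ₂ ⊆ ℝ^{2n} be Lagrangian subspaces with respective frames 𝐗₁ = (X₁; Y₁) and 𝐗₂ = (X₂; Y₂), and define the complex n×n matrix W̃ := −(X₁ + iY₁)(X₁ − iY₁)⁻¹(X₂ − iY₂)(X₂ + iY₂)⁻¹. Then the complex dimension of ker(W̃ + Iₙ) equals the real dimension of ℓ₁ ∩ ℓ₂; that is, the multiplicity of −1 as an eigenvalue of W̃ is precisely dim(ℓ₁ ∩ ℓ₂). -/

import Mathlib

open Matrix

noncomputable section

/-- The standard symplectic matrix `J = [[0, -I],[I, 0]]` on `ℝ^{2n}`,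
with `ℝ^{2n}` modeled as `Fin n ⊕ Fin n → ℝ`. -/
def Jmat (n : ℕ) : Matrix (Fin n ⊕ Fin n) (Fin n ⊕ Fin n) ℝ :=
  Matrix.fromBlocks 0 (-1) 1 0

/-- A subspace `ℓ ⊆ ℝ^{2n}` is Lagrangian if it has dimension `n` and
`(Jx, y) = 0` for all `x, y ∈ ℓ`. -/
def IsLagrangian (n : ℕ) (ℓ : Submodule ℝ (Fin n ⊕ Fin n → ℝ)) : Prop :=
  Module.finrank ℝ ℓ = n ∧ ∀ x ∈ ℓ, ∀ y ∈ ℓ, (Jmat n).mulVec x ⬝ᵥ y = 0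

/-- A `2n × n` matrix `M` is a frame for the subspace `ℓ ⊆ ℝ^{2n}` if its
columns are linearly independent and span `ℓ` (i.e. form a basis of `ℓ`). -/
def IsFrameOf (n : ℕ) (M : Matrix (Fin n ⊕ Fin n) (Fin n) ℝ)
    (ℓ : Submodule ℝ (Fin n ⊕ Fin n → ℝ)) : Prop :=
  LinearIndependent ℝ (fun j : Fin n => fun i => M i j) ∧
    Submodule.span ℝ (Set.range (fun j : Fin n => fun i => M i j)) = ℓ

/-- The `2n × n` matrix `𝐗 = (X; Y)` with `n × n` blocks `X` and `Y` stacked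
vertically. -/
def vframe {n : ℕ} (X Y : Matrix (Fin n) (Fin n) ℝ) :
    Matrix (Fin n ⊕ Fin n) (Fin n) ℝ :=
  Matrix.fromRows X Y

/-- The complex matrix `X + iY` built from real matrices `X` and `Y`. -/
def cplx {n : ℕ} (X Y : Matrix (Fin n) (Fin n) ℝ) : Matrix (Fin n) (Fin n) ℂ :=
  X.map (fun a => (a : ℂ)) + Complex.I • Y.map (fun a => (a : ℂ))

end

namespace SFAux

open Complex

variable {n : ℕ}

/-- A real matrix mapped entrywise into `ℂ`. -/
noncomputable def cm (X : Matrix (Fin n) (Fin n) ℝ) : Matrix (Fin n) (Fin n) ℂ :=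
  X.map (fun a => (a : ℂ))

lemma cplx_eq (X Y : Matrix (Fin n) (Fin n) ℝ) : cplx X Y = cm X + Complex.I • cm Y := rfl

lemma cm_neg (Y : Matrix (Fin n) (Fin n) ℝ) : cm (-Y) = -(cm Y) := by
  ext i j; simp [cm]

lemma cplx_mulVec (X Y : Matrix (Fin n) (Fin n) ℝ) (c : Fin n → ℂ) :
    cplx X Y *ᵥ c = cm X *ᵥ c + Complex.I • (cm Y *ᵥ c) := by
  rw [cplx_eq, Matrix.add_mulVec, Matrix.smul_mulVec]

lemma pair_of_cplx {X₁ Y₁ X₂ Y₂ : Matrix (Fin n) (Fin n) ℝ} {c₁ c₂ : Fin n → ℂ}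
    (hA : cplx X₁ Y₁ *ᵥ c₁ = cplx X₂ Y₂ *ᵥ c₂)
    (hB : cplx X₁ (-Y₁) *ᵥ c₁ = cplx X₂ (-Y₂) *ᵥ c₂) :
    cm X₁ *ᵥ c₁ = cm X₂ *ᵥ c₂ ∧ cm Y₁ *ᵥ c₁ = cm Y₂ *ᵥ c₂ := by
  simp only [cplx_mulVec, cm_neg, Matrix.neg_mulVec, smul_neg] at hA hB
  constructor
  · have h : (2:ℂ) • (cm X₁ *ᵥ c₁) = (2:ℂ) • (cm X₂ *ᵥ c₂) := by
      have := congrArg₂ (· + ·) hA hB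
      linear_combination (norm := module) this
    exact smul_right_injective _ (two_ne_zero) h
  · have h : ((2:ℂ) * Complex.I) • (cm Y₁ *ᵥ c₁) = ((2:ℂ) * Complex.I) • (cm Y₂ *ᵥ c₂) := by
      have := congrArg₂ (· - ·) hA hB
      linear_combination (norm := module) this
    exact smul_right_injective _ (by simp [Complex.I_ne_zero]) h

lemma cplx_of_pair {X₁ Y₁ X₂ Y₂ : Matrix (Fin n) (Fin n) ℝ} {c₁ c₂ : Fin n → ℂ}
    (hX : cm X₁ *ᵥ c₁ = cm X₂ *ᵥ c₂) (hY : cm Y₁ *ᵥ c₁ = cm Y₂ *ᵥ c₂) :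
    cplx X₁ Y₁ *ᵥ c₁ = cplx X₂ Y₂ *ᵥ c₂ ∧ cplx X₁ (-Y₁) *ᵥ c₁ = cplx X₂ (-Y₂) *ᵥ c₂ := by
  simp only [cplx_mulVec, cm_neg, Matrix.neg_mulVec, smul_neg, hX, hY]
  exact ⟨trivial, trivial⟩

lemma gram_isUnit {M : Matrix (Fin n ⊕ Fin n) (Fin n) ℝ}
    (h : LinearIndependent ℝ (fun j : Fin n => fun i => M i j)) : IsUnit (Mᵀ * M) := by
  rw [← Matrix.mulVec_injective_iff_isUnit]
  have hM : Function.Injective M.mulVec := by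
    rw [Matrix.mulVec_injective_iff]
    exact h
  intro v w hvw
  have key : ∀ u, (Mᵀ * M) *ᵥ u = 0 → u = 0 := by
    intro u hu
    have h1 : (M *ᵥ u) ⬝ᵥ (M *ᵥ u) = 0 := by
      have : u ⬝ᵥ ((Mᵀ * M) *ᵥ u) = 0 := by rw [hu]; simp
      rwa [← Matrix.mulVec_mulVec, dotProduct_mulVec, Matrix.vecMul_transpose] at this
    have h2 : M *ᵥ u = 0 := dotProduct_self_eq_zero.mp h1
    exact hM (a₁ := u) (a₂ := 0) (by simpa using h2)
  have := key (v - w) (by rw [Matrix.mulVec_sub, hvw, sub_self])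
  exact sub_eq_zero.mp this

lemma cm_conjTranspose (X : Matrix (Fin n) (Fin n) ℝ) : (cm X)ᴴ = cm Xᵀ := by
  ext i j; simp [cm, Matrix.conjTranspose_apply]

lemma cm_mul (X Y : Matrix (Fin n) (Fin n) ℝ) : cm (X * Y) = cm X * cm Y := by
  have : cm (X * Y) = Complex.ofRealHom.mapMatrix (X * Y) := rfl
  rw [this, _root_.map_mul]; rfl

lemma cm_add (X Y : Matrix (Fin n) (Fin n) ℝ) : cm (X + Y) = cm X + cm Y := by
  ext i j; simp [cm]

lemma isUnit_cplx {X Y : Matrix (Fin n) (Fin n) ℝ} (hsym : Xᵀ * Y = Yᵀ * X)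
    (hG : IsUnit (Xᵀ * X + Yᵀ * Y)) : IsUnit (cplx X Y) := by
  have hCH : (cplx X Y)ᴴ = cm Xᵀ - Complex.I • cm Yᵀ := by
    show (cm X + Complex.I • cm Y)ᴴ = _
    rw [conjTranspose_add, conjTranspose_smul, cm_conjTranspose, cm_conjTranspose]
    simp [sub_eq_add_neg]
  have key : (cplx X Y)ᴴ * cplx X Y = cm (Xᵀ * X + Yᵀ * Y) := by
    rw [hCH]
    rw [cm_add, cm_mul, cm_mul]
    have e : (cplx X Y) = cm X + Complex.I • cm Y := rfl
    rw [e, sub_mul, mul_add, mul_add, smul_mul_assoc, smul_mul_assoc, mul_smul_comm,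
      mul_smul_comm, smul_smul, Complex.I_mul_I, ← cm_mul, ← cm_mul, ← cm_mul, ← cm_mul, hsym]
    module
  have hunit : IsUnit ((cplx X Y)ᴴ * cplx X Y) := by
    rw [key]
    have : cm (Xᵀ * X + Yᵀ * Y) = Complex.ofRealHom.mapMatrix (Xᵀ * X + Yᵀ * Y) := rfl
    rw [this]
    exact hG.map _
  have hdet : IsUnit ((cplx X Y)ᴴ * cplx X Y).det := (Matrix.isUnit_iff_isUnit_det _).mp hunit
  rw [Matrix.det_mul] at hdet
  exact (Matrix.isUnit_iff_isUnit_det _).mpr (isUnit_of_mul_isUnit_right hdet)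

lemma vframe_gram (X Y : Matrix (Fin n) (Fin n) ℝ) :
    (vframe X Y)ᵀ * vframe X Y = Xᵀ * X + Yᵀ * Y := by
  ext i j
  simp [vframe, Matrix.mul_apply, Fintype.sum_sum_type, Matrix.transpose_apply]

lemma frame_sym {ℓ : Submodule ℝ (Fin n ⊕ Fin n → ℝ)} {X Y : Matrix (Fin n) (Fin n) ℝ}
    (hℓ : IsLagrangian n ℓ) (hf : IsFrameOf n (vframe X Y) ℓ) : Xᵀ * Y = Yᵀ * X := by
  have hmem : ∀ j, (fun i => vframe X Y i j) ∈ ℓ := fun j =>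
    hf.2 ▸ Submodule.subset_span ⟨j, rfl⟩
  ext j k
  have h := hℓ.2 _ (hmem j) _ (hmem k)
  have hJ : ∀ (x : Fin n ⊕ Fin n → ℝ) (i : Fin n),
      ((Jmat n) *ᵥ x) (Sum.inl i) = -x (Sum.inr i) ∧
        ((Jmat n) *ᵥ x) (Sum.inr i) = x (Sum.inl i) := by
    intro x i
    constructor <;>
      simp [Jmat, Matrix.mulVec, dotProduct, Fintype.sum_sum_type,
        Matrix.one_apply, Finset.sum_ite_eq, mul_comm]
  rw [dotProduct, Fintype.sum_sum_type] at h
  simp only [(hJ _ _).1, (hJ _ _).2] at h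
  have h' : ∑ i, X i j * Y i k - ∑ i, Y i j * X i k = 0 := by
    simp only [vframe, Matrix.fromRows_apply_inl, Matrix.fromRows_apply_inr] at h
    rw [← Finset.sum_add_distrib] at h
    rw [← Finset.sum_sub_distrib, ← h]
    apply Finset.sum_congr rfl
    intro i _
    ring
  rw [Matrix.mul_apply, Matrix.mul_apply]
  simp only [Matrix.transpose_apply]
  linarith [h']

lemma mulVec_re (X : Matrix (Fin n) (Fin n) ℝ) (v : Fin n → ℂ) :
    (fun i => ((cm X *ᵥ v) i).re) = X *ᵥ (fun j => (v j).re) := by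
  funext i
  simp [cm, Matrix.mulVec, dotProduct, Complex.re_sum, Complex.mul_re]

lemma mulVec_im (X : Matrix (Fin n) (Fin n) ℝ) (v : Fin n → ℂ) :
    (fun i => ((cm X *ᵥ v) i).im) = X *ᵥ (fun j => (v j).im) := by
  funext i
  simp [cm, Matrix.mulVec, dotProduct, Complex.im_sum, Complex.mul_im]

lemma mulVec_ofReal (X : Matrix (Fin n) (Fin n) ℝ) (a : Fin n → ℝ) :
    cm X *ᵥ (fun j => ((a j : ℂ))) = fun i => ((X *ᵥ a) i : ℂ) := by
  funext i
  simp [cm, Matrix.mulVec, dotProduct]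

lemma re_pair {X₁ X₂ : Matrix (Fin n) (Fin n) ℝ} {v₁ v₂ : Fin n → ℂ}
    (h : cm X₁ *ᵥ v₁ = cm X₂ *ᵥ v₂) :
    X₁ *ᵥ (fun j => (v₁ j).re) = X₂ *ᵥ (fun j => (v₂ j).re) := by
  rw [← mulVec_re, ← mulVec_re, h]

lemma im_pair {X₁ X₂ : Matrix (Fin n) (Fin n) ℝ} {v₁ v₂ : Fin n → ℂ}
    (h : cm X₁ *ᵥ v₁ = cm X₂ *ᵥ v₂) :
    X₁ *ᵥ (fun j => (v₁ j).im) = X₂ *ᵥ (fun j => (v₂ j).im) := by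
  rw [← mulVec_im, ← mulVec_im, h]

lemma cm_pair {X₁ X₂ : Matrix (Fin n) (Fin n) ℝ} {a₁ a₂ b₁ b₂ : Fin n → ℝ}
    (hre : X₁ *ᵥ a₁ = X₂ *ᵥ a₂) (him : X₁ *ᵥ b₁ = X₂ *ᵥ b₂) :
    cm X₁ *ᵥ (fun j => (a₁ j : ℂ) + (b₁ j : ℂ) * Complex.I)
      = cm X₂ *ᵥ (fun j => (a₂ j : ℂ) + (b₂ j : ℂ) * Complex.I) := by
  have e : ∀ (a b : Fin n → ℝ), (fun j => (a j : ℂ) + (b j : ℂ) * Complex.I)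
      = (fun j => ((a j : ℂ))) + Complex.I • (fun j => ((b j : ℂ))) := by
    intro a b; funext j; simp [mul_comm]
  rw [e, e, Matrix.mulVec_add, Matrix.mulVec_add, Matrix.mulVec_smul, Matrix.mulVec_smul,
    mulVec_ofReal, mulVec_ofReal, mulVec_ofReal, mulVec_ofReal, hre, him]

end SFAux

set_option maxHeartbeats 1000000 in
/-- For Lagrangian subspaces `ℓ₁`, `ℓ₂` with frames
`(X₁; Y₁)`, `(X₂; Y₂)` and
`W̃ = -(X₁ + iY₁)(X₁ - iY₁)⁻¹(X₂ - iY₂)(X₂ + iY₂)⁻¹`, the complex dimension of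
`ker (W̃ + I)` equals the real dimension of `ℓ₁ ∩ ℓ₂`. -/
theorem dim_ker_W_add_one_eq_dim_inter (n : ℕ)
    (ℓ₁ ℓ₂ : Submodule ℝ (Fin n ⊕ Fin n → ℝ))
    (hℓ₁ : IsLagrangian n ℓ₁) (hℓ₂ : IsLagrangian n ℓ₂)
    (X₁ Y₁ X₂ Y₂ : Matrix (Fin n) (Fin n) ℝ)
    (hf₁ : IsFrameOf n (vframe X₁ Y₁) ℓ₁) (hf₂ : IsFrameOf n (vframe X₂ Y₂) ℓ₂) :
    Module.finrank ℂ
        (LinearMap.ker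
          ((-(cplx X₁ Y₁ * (cplx X₁ (-Y₁))⁻¹ * (cplx X₂ (-Y₂)) * (cplx X₂ Y₂)⁻¹)
            + 1).mulVecLin))
      = Module.finrank ℝ ↥(ℓ₁ ⊓ ℓ₂) := by
  classical
  obtain ⟨hli₁, hsp₁⟩ := hf₁
  obtain ⟨hli₂, hsp₂⟩ := hf₂
  have hsym₁ : X₁ᵀ * Y₁ = Y₁ᵀ * X₁ := SFAux.frame_sym hℓ₁ ⟨hli₁, hsp₁⟩
  have hsym₂ : X₂ᵀ * Y₂ = Y₂ᵀ * X₂ := SFAux.frame_sym hℓ₂ ⟨hli₂, hsp₂⟩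
  have hG₁ : IsUnit (X₁ᵀ * X₁ + Y₁ᵀ * Y₁) := by
    rw [← SFAux.vframe_gram]; exact SFAux.gram_isUnit hli₁
  have hG₂ : IsUnit (X₂ᵀ * X₂ + Y₂ᵀ * Y₂) := by
    rw [← SFAux.vframe_gram]; exact SFAux.gram_isUnit hli₂
  have hB1 : IsUnit (cplx X₁ (-Y₁)) :=
    SFAux.isUnit_cplx (by rw [Matrix.transpose_neg, Matrix.neg_mul, Matrix.mul_neg, hsym₁])
      (by rwa [Matrix.transpose_neg, neg_mul_neg])
  have hA2 : IsUnit (cplx X₂ Y₂) := SFAux.isUnit_cplx hsym₂ hG₂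
  set A1 := cplx X₁ Y₁ with hA1def
  set B1 := cplx X₁ (-Y₁) with hB1def
  set B2 := cplx X₂ (-Y₂) with hB2def
  set A2 := cplx X₂ Y₂ with hA2def
  have hB1d : IsUnit B1.det := (Matrix.isUnit_iff_isUnit_det B1).mp hB1
  have hA2d : IsUnit A2.det := (Matrix.isUnit_iff_isUnit_det A2).mp hA2
  have hB1i : ∀ v, B1 *ᵥ (B1⁻¹ *ᵥ v) = v := fun v => by
    rw [Matrix.mulVec_mulVec, Matrix.mul_nonsing_inv _ hB1d, Matrix.one_mulVec]
  have hB1i' : ∀ v, B1⁻¹ *ᵥ (B1 *ᵥ v) = v := fun v => by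
    rw [Matrix.mulVec_mulVec, Matrix.nonsing_inv_mul _ hB1d, Matrix.one_mulVec]
  have hA2i : ∀ v, A2 *ᵥ (A2⁻¹ *ᵥ v) = v := fun v => by
    rw [Matrix.mulVec_mulVec, Matrix.mul_nonsing_inv _ hA2d, Matrix.one_mulVec]
  have hA2i' : ∀ v, A2⁻¹ *ᵥ (A2 *ᵥ v) = v := fun v => by
    rw [Matrix.mulVec_mulVec, Matrix.nonsing_inv_mul _ hA2d, Matrix.one_mulVec]
  -- the complex solution space
  set Tc : ((Fin n → ℂ) × (Fin n → ℂ)) →ₗ[ℂ] ((Fin n → ℂ) × (Fin n → ℂ)) :=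
    LinearMap.prod
      ((SFAux.cm X₁).mulVecLin ∘ₗ LinearMap.fst ℂ _ _
        - (SFAux.cm X₂).mulVecLin ∘ₗ LinearMap.snd ℂ _ _)
      ((SFAux.cm Y₁).mulVecLin ∘ₗ LinearMap.fst ℂ _ _
        - (SFAux.cm Y₂).mulVecLin ∘ₗ LinearMap.snd ℂ _ _) with hTc
  set Kc := LinearMap.ker Tc with hKcdef
  have hKc : ∀ p : (Fin n → ℂ) × (Fin n → ℂ),
      p ∈ Kc ↔ SFAux.cm X₁ *ᵥ p.1 = SFAux.cm X₂ *ᵥ p.2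
        ∧ SFAux.cm Y₁ *ᵥ p.1 = SFAux.cm Y₂ *ᵥ p.2 := by
    intro p
    simp only [hKcdef, hTc, LinearMap.mem_ker, LinearMap.prod_apply, Function.prod,
      LinearMap.sub_apply, LinearMap.comp_apply, LinearMap.fst_apply, LinearMap.snd_apply,
      Matrix.mulVecLin_apply, Prod.mk_eq_zero, sub_eq_zero]
  -- the real solution space
  set Tr : ((Fin n → ℝ) × (Fin n → ℝ)) →ₗ[ℝ] ((Fin n → ℝ) × (Fin n → ℝ)) :=
    LinearMap.prod
      (X₁.mulVecLin ∘ₗ LinearMap.fst ℝ _ _ - X₂.mulVecLin ∘ₗ LinearMap.snd ℝ _ _)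
      (Y₁.mulVecLin ∘ₗ LinearMap.fst ℝ _ _ - Y₂.mulVecLin ∘ₗ LinearMap.snd ℝ _ _) with hTr
  set Kr := LinearMap.ker Tr with hKrdef
  have hKr : ∀ p : (Fin n → ℝ) × (Fin n → ℝ),
      p ∈ Kr ↔ X₁ *ᵥ p.1 = X₂ *ᵥ p.2 ∧ Y₁ *ᵥ p.1 = Y₂ *ᵥ p.2 := by
    intro p
    simp only [hKrdef, hTr, LinearMap.mem_ker, LinearMap.prod_apply, Function.prod,
      LinearMap.sub_apply, LinearMap.comp_apply, LinearMap.fst_apply, LinearMap.snd_apply,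
      Matrix.mulVecLin_apply, Prod.mk_eq_zero, sub_eq_zero]
  -- Step A : the kernel of W+1 is ℂ-equivalent to Kc
  set W1 := -(A1 * B1⁻¹ * B2 * A2⁻¹) + 1 with hW1
  have hker : ∀ v : Fin n → ℂ, v ∈ LinearMap.ker W1.mulVecLin ↔
      A1 *ᵥ (B1⁻¹ *ᵥ (B2 *ᵥ (A2⁻¹ *ᵥ v))) = v := by
    intro v
    rw [LinearMap.mem_ker, Matrix.mulVecLin_apply, hW1, Matrix.add_mulVec, Matrix.neg_mulVec,
      Matrix.one_mulVec, neg_add_eq_zero]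
    simp only [Matrix.mulVec_mulVec, Matrix.mul_assoc]
  set F : (Fin n → ℂ) →ₗ[ℂ] ((Fin n → ℂ) × (Fin n → ℂ)) :=
    LinearMap.prod (B1⁻¹ * (B2 * A2⁻¹)).mulVecLin (A2⁻¹).mulVecLin with hF
  have hc1 : ∀ v, (B1⁻¹ * (B2 * A2⁻¹)) *ᵥ v = B1⁻¹ *ᵥ (B2 *ᵥ (A2⁻¹ *ᵥ v)) := by
    intro v; simp only [Matrix.mulVec_mulVec]
  have hFmem : ∀ v ∈ LinearMap.ker W1.mulVecLin, F v ∈ Kc := by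
    intro v hv
    rw [hker] at hv
    have hA : A1 *ᵥ ((B1⁻¹ * (B2 * A2⁻¹)) *ᵥ v) = A2 *ᵥ ((A2⁻¹) *ᵥ v) := by
      rw [hc1, hv, hA2i]
    have hB : B1 *ᵥ ((B1⁻¹ * (B2 * A2⁻¹)) *ᵥ v) = B2 *ᵥ ((A2⁻¹) *ᵥ v) := by
      rw [hc1, hB1i]
    rw [hKc]
    exact SFAux.pair_of_cplx hA hB
  have hGmem : ∀ p ∈ Kc, A2 *ᵥ p.2 ∈ LinearMap.ker W1.mulVecLin := by
    intro p hp
    rw [hKc] at hp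
    obtain ⟨hA, hB⟩ := SFAux.cplx_of_pair hp.1 hp.2
    rw [hker, hA2i', ← hB, hB1i', hA]
  set f : LinearMap.ker W1.mulVecLin →ₗ[ℂ] Kc :=
    LinearMap.codRestrict Kc (F ∘ₗ (LinearMap.ker W1.mulVecLin).subtype)
      (fun v => hFmem v.1 v.2) with hf
  set g : Kc →ₗ[ℂ] LinearMap.ker W1.mulVecLin :=
    LinearMap.codRestrict _ ((A2.mulVecLin ∘ₗ LinearMap.snd ℂ _ _) ∘ₗ Kc.subtype)
      (fun p => hGmem p.1 p.2) with hg
  have e1 : (LinearMap.ker W1.mulVecLin) ≃ₗ[ℂ] Kc := by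
    refine LinearEquiv.ofLinear f g ?_ ?_
    · apply LinearMap.ext
      intro p
      apply Subtype.ext
      have hp := (hKc p.1).mp p.2
      obtain ⟨hA, hB⟩ := SFAux.cplx_of_pair hp.1 hp.2
      show F (A2 *ᵥ (p : (Fin n → ℂ) × (Fin n → ℂ)).2) = (p : (Fin n → ℂ) × (Fin n → ℂ))
      have h1 : (B1⁻¹ * (B2 * A2⁻¹)) *ᵥ (A2 *ᵥ (p : (Fin n → ℂ) × (Fin n → ℂ)).2)
          = (p : (Fin n → ℂ) × (Fin n → ℂ)).1 := by
        rw [hc1, hA2i', ← hB, hB1i']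
      have h2 : A2⁻¹ *ᵥ (A2 *ᵥ (p : (Fin n → ℂ) × (Fin n → ℂ)).2)
          = (p : (Fin n → ℂ) × (Fin n → ℂ)).2 := hA2i' _
      exact Prod.ext h1 h2
    · apply LinearMap.ext
      intro v
      apply Subtype.ext
      exact hA2i v.1
  have E1 : Module.finrank ℂ (LinearMap.ker W1.mulVecLin) = Module.finrank ℂ Kc :=
    e1.finrank_eq
  -- Step B : finrank ℝ Kc = 2 * finrank ℂ Kc
  have E2 : Module.finrank ℝ ℂ * Module.finrank ℂ Kc = Module.finrank ℝ Kc :=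
    Module.finrank_mul_finrank ℝ ℂ Kc
  rw [Complex.finrank_real_complex] at E2
  -- Step C : finrank ℝ Kc = 2 * finrank ℝ Kr
  set reL : (Fin n → ℂ) →ₗ[ℝ] (Fin n → ℝ) := Complex.reLm.compLeft (Fin n) with hreL
  set imL : (Fin n → ℂ) →ₗ[ℝ] (Fin n → ℝ) := Complex.imLm.compLeft (Fin n) with himL
  have hreLmem : ∀ p ∈ Kc, ((reL.prodMap reL) p ∈ Kr ∧ (imL.prodMap imL) p ∈ Kr) := by
    intro p hp
    rw [hKc] at hp
    constructor
    · rw [hKr]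
      exact ⟨SFAux.re_pair hp.1, SFAux.re_pair hp.2⟩
    · rw [hKr]
      exact ⟨SFAux.im_pair hp.1, SFAux.im_pair hp.2⟩
  set ψ : (((Fin n → ℝ) × (Fin n → ℝ)) × ((Fin n → ℝ) × (Fin n → ℝ)))
      →ₗ[ℝ] ((Fin n → ℂ) × (Fin n → ℂ)) :=
    { toFun := fun q => (fun i => (q.1.1 i : ℂ) + (q.2.1 i : ℂ) * Complex.I,
        fun i => (q.1.2 i : ℂ) + (q.2.2 i : ℂ) * Complex.I)
      map_add' := by
        intro q r
        refine Prod.ext ?_ ?_ <;>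
          · funext i
            simp only [Prod.fst_add, Prod.snd_add, Pi.add_apply, Complex.ofReal_add]
            ring
      map_smul' := by
        intro r q
        refine Prod.ext ?_ ?_ <;>
          · funext i
            simp only [Prod.smul_fst, Prod.smul_snd, Pi.smul_apply, smul_eq_mul,
              RingHom.id_apply, Complex.real_smul, Complex.ofReal_mul]
            ring } with hψ
  have hψmem : ∀ (a : ↥Kr) (b : ↥Kr),
      ψ (a.1, b.1) ∈ Kc.restrictScalars ℝ := by
    intro a b
    rw [Submodule.restrictScalars_mem, hKc]
    have ha := (hKr a.1).mp a.2
    have hb := (hKr b.1).mp b.2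
    exact ⟨SFAux.cm_pair ha.1 hb.1, SFAux.cm_pair ha.2 hb.2⟩
  set fRe : ↥(Kc.restrictScalars ℝ) →ₗ[ℝ] ↥Kr :=
    LinearMap.codRestrict Kr ((reL.prodMap reL) ∘ₗ (Kc.restrictScalars ℝ).subtype)
      (fun p => (hreLmem p.1 p.2).1) with hfRe
  set fIm : ↥(Kc.restrictScalars ℝ) →ₗ[ℝ] ↥Kr :=
    LinearMap.codRestrict Kr ((imL.prodMap imL) ∘ₗ (Kc.restrictScalars ℝ).subtype)
      (fun p => (hreLmem p.1 p.2).2) with hfIm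
  have e2 : ↥(Kc.restrictScalars ℝ) ≃ₗ[ℝ] ↥Kr × ↥Kr := by
    refine LinearEquiv.ofBijective (LinearMap.prod fRe fIm) ⟨?_, ?_⟩
    · rw [injective_iff_map_eq_zero]
      intro p hp
      rw [Prod.ext_iff] at hp
      have h1 : (fRe p : (Fin n → ℝ) × (Fin n → ℝ)) = 0 := congrArg Subtype.val hp.1
      have h2 : (fIm p : (Fin n → ℝ) × (Fin n → ℝ)) = 0 := congrArg Subtype.val hp.2
      apply Subtype.ext
      refine Prod.ext ?_ ?_
      · funext i
        apply Complex.ext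
        · exact congrFun (congrArg Prod.fst h1) i
        · exact congrFun (congrArg Prod.fst h2) i
      · funext i
        apply Complex.ext
        · exact congrFun (congrArg Prod.snd h1) i
        · exact congrFun (congrArg Prod.snd h2) i
    · rintro ⟨a, b⟩
      refine ⟨⟨ψ (a.1, b.1), hψmem a b⟩, ?_⟩
      refine Prod.ext (Subtype.ext (Prod.ext ?_ ?_)) (Subtype.ext (Prod.ext ?_ ?_))
      · funext i
        show ((a.1.1 i : ℂ) + (b.1.1 i : ℂ) * Complex.I).re = a.1.1 i
        simp
      · funext i
        show ((a.1.2 i : ℂ) + (b.1.2 i : ℂ) * Complex.I).re = a.1.2 i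
        simp
      · funext i
        show ((a.1.1 i : ℂ) + (b.1.1 i : ℂ) * Complex.I).im = b.1.1 i
        simp
      · funext i
        show ((a.1.2 i : ℂ) + (b.1.2 i : ℂ) * Complex.I).im = b.1.2 i
        simp
  have E3 : Module.finrank ℝ Kc = 2 * Module.finrank ℝ Kr := by
    have h1 : Module.finrank ℝ ↥(Kc.restrictScalars ℝ) = Module.finrank ℝ Kc :=
      ((Submodule.restrictScalarsEquiv ℝ ℂ ((Fin n → ℂ) × (Fin n → ℂ)) Kc).restrictScalars ℝ).finrank_eq
    have h2 : Module.finrank ℝ ↥(Kc.restrictScalars ℝ)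
        = Module.finrank ℝ (↥Kr × ↥Kr) := e2.finrank_eq
    rw [Module.finrank_prod] at h2
    omega
  -- Step D : finrank ℝ Kr = finrank ℝ (ℓ₁ ⊓ ℓ₂)
  have hmemrange : ∀ (X Y : Matrix (Fin n) (Fin n) ℝ) (ℓ : Submodule ℝ (Fin n ⊕ Fin n → ℝ)),
      Submodule.span ℝ (Set.range (fun j : Fin n => fun i => vframe X Y i j)) = ℓ →
        ∀ c : Fin n → ℝ, vframe X Y *ᵥ c ∈ ℓ := by
    intro X Y ℓ hsp c
    rw [← hsp]
    have h : vframe X Y *ᵥ c ∈ LinearMap.range (vframe X Y).mulVecLin := ⟨c, rfl⟩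
    rwa [Matrix.range_mulVecLin] at h
  have heq : ∀ p ∈ Kr, vframe X₁ Y₁ *ᵥ p.1 = vframe X₂ Y₂ *ᵥ p.2 := by
    intro p hp
    rw [hKr] at hp
    rw [vframe, vframe, Matrix.fromRows_mulVec, Matrix.fromRows_mulVec, hp.1, hp.2]
  have hLmem : ∀ p ∈ Kr, vframe X₁ Y₁ *ᵥ p.1 ∈ ℓ₁ ⊓ ℓ₂ := by
    intro p hp
    refine ⟨hmemrange X₁ Y₁ ℓ₁ hsp₁ p.1, ?_⟩
    rw [heq p hp]
    exact hmemrange X₂ Y₂ ℓ₂ hsp₂ p.2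
  set L : ↥Kr →ₗ[ℝ] ↥(ℓ₁ ⊓ ℓ₂) :=
    LinearMap.codRestrict _ ((vframe X₁ Y₁).mulVecLin ∘ₗ (LinearMap.fst ℝ _ _) ∘ₗ Kr.subtype)
      (fun p => hLmem p.1 p.2) with hL
  have hinj1 : Function.Injective (vframe X₁ Y₁).mulVec := Matrix.mulVec_injective_iff.mpr hli₁
  have hinj2 : Function.Injective (vframe X₂ Y₂).mulVec := Matrix.mulVec_injective_iff.mpr hli₂
  have hLbij : Function.Bijective L := by
    constructor
    · rw [injective_iff_map_eq_zero]
      intro p hp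
      have h0 : vframe X₁ Y₁ *ᵥ (p : (Fin n → ℝ) × (Fin n → ℝ)).1 = 0 :=
        congrArg Subtype.val hp
      have h1 : (p : (Fin n → ℝ) × (Fin n → ℝ)).1 = 0 :=
        hinj1 (by rw [h0, Matrix.mulVec_zero])
      have h2 : (p : (Fin n → ℝ) × (Fin n → ℝ)).2 = 0 := by
        apply hinj2
        rw [Matrix.mulVec_zero, ← heq p.1 p.2, h0]
      exact Subtype.ext (Prod.ext h1 h2)
    · rintro ⟨x, hx1, hx2⟩
      have hr1 : x ∈ LinearMap.range (vframe X₁ Y₁).mulVecLin := by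
        rw [Matrix.range_mulVecLin]
        exact hsp₁ ▸ hx1
      have hr2 : x ∈ LinearMap.range (vframe X₂ Y₂).mulVecLin := by
        rw [Matrix.range_mulVecLin]
        exact hsp₂ ▸ hx2
      obtain ⟨c₁, hc₁⟩ := hr1
      obtain ⟨c₂, hc₂⟩ := hr2
      have hv : vframe X₁ Y₁ *ᵥ c₁ = vframe X₂ Y₂ *ᵥ c₂ := by
        rw [show vframe X₁ Y₁ *ᵥ c₁ = x from hc₁, show vframe X₂ Y₂ *ᵥ c₂ = x from hc₂]
      rw [vframe, vframe, Matrix.fromRows_mulVec, Matrix.fromRows_mulVec] at hv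
      have hXeq : X₁ *ᵥ c₁ = X₂ *ᵥ c₂ := funext fun i => congrFun hv (Sum.inl i)
      have hYeq : Y₁ *ᵥ c₁ = Y₂ *ᵥ c₂ := funext fun i => congrFun hv (Sum.inr i)
      have hmem : (c₁, c₂) ∈ Kr := (hKr (c₁, c₂)).mpr ⟨hXeq, hYeq⟩
      exact ⟨⟨(c₁, c₂), hmem⟩, Subtype.ext hc₁⟩
  have E4 : Module.finrank ℝ Kr = Module.finrank ℝ ↥(ℓ₁ ⊓ ℓ₂) :=
    (LinearEquiv.ofBijective L hLbij).finrank_eq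
  omega
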